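/- arXiv:1604.01700 — 2 statements merged into one kernel-verified Lean document; each statement's English description precedes it below -/
import Mathlib

section
/- If a and b are involutions in S₇ generating a subgroup isomorphic to the dihedral group D₇ of order 14, then a is a product of exactly 3 disjoint transpositions (equivalently, a fixes exactly one element of {1,...,7}), and similarly for b, and the fixed points of a and b are distinct. -/
open Equiv Equiv.Perm

lemma seven_dvd_of_zpow_fixed {c : Perm (Fin 7)} (hc : orderOf c = 7)
    (n : ℤ) (x : Fin 7) (hx : (c ^ n) x = x) : (7 : ℤ) ∣ n := by
  by_contra hdvd
  have hmod : (0:ℤ) ≤ n % 7 := Int.emod_nonneg n (by norm_num)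
  have hlt : n % 7 < 7 := Int.emod_lt_of_pos n (by norm_num)
  set m : ℕ := (n % 7).toNat with hm
  have hmn : (m : ℤ) = n % 7 := Int.toNat_of_nonneg hmod
  have hm0 : m ≠ 0 := by
    intro h0
    exact hdvd (Int.dvd_of_emod_eq_zero (by omega))
  have hcm : c ^ (n : ℤ) = c ^ m := by
    have h1 : c ^ (n % (orderOf c : ℤ)) = c ^ n := zpow_mod_orderOf c n
    rw [hc, show ((7:ℕ):ℤ) = 7 by norm_num] at h1
    rw [← h1, ← hmn, zpow_natCast]
  have hmlt : m < 7 := by omega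
  have hcop : (orderOf c).Coprime m := by
    rw [hc]
    exact (Nat.Prime.coprime_iff_not_dvd (by norm_num : Nat.Prime 7)).mpr
      (fun hd => absurd (Nat.le_of_dvd (Nat.pos_of_ne_zero hm0) hd) (not_le.mpr hmlt))
  have hord : orderOf (c ^ m) = 7 := by rw [hcop.orderOf_pow, hc]
  have hcycle : (c ^ m).IsCycle :=
    isCycle_of_prime_order'' (by simp; norm_num) (by simp [hord])
  have hsupp : (c ^ m).support = Finset.univ := by
    apply Finset.eq_univ_of_card
    rw [← hcycle.orderOf, hord]
    simp
  have : (c ^ m) x ≠ x := by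
    rw [← Equiv.Perm.mem_support, hsupp]; exact Finset.mem_univ x
  rw [hcm] at hx
  exact this hx

lemma cycle_nofix {c : Perm (Fin 7)} (hc : orderOf c = 7) (x : Fin 7) : c x ≠ x := by
  intro hx
  have := seven_dvd_of_zpow_fixed hc 1 x (by simpa using hx)
  norm_num at this

lemma cycle_trans {c : Perm (Fin 7)} (hc : orderOf c = 7) (x y : Fin 7) :
    ∃ k : ℤ, (c ^ k) x = y := by
  have hcycle : c.IsCycle := isCycle_of_prime_order'' (by simp; norm_num) (by simp [hc])
  obtain ⟨z, hz, hall⟩ := hcycle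
  exact (hall (cycle_nofix hc x)).symm.trans (hall (cycle_nofix hc y))

lemma conj_zpow_apply {c u : Perm (Fin 7)} (hu : u * u = 1) (huc : u * c * u = c⁻¹)
    (k : ℤ) (x : Fin 7) : u ((c ^ k) x) = (c ^ (-k)) (u x) := by
  have huinv : u⁻¹ = u := inv_eq_of_mul_eq_one_right hu
  have h1 : u * c * u⁻¹ = c⁻¹ := by rw [huinv]; exact huc
  have h2 : u * c ^ k * u⁻¹ = c ^ (-k) := by
    have h := map_zpow (MulAut.conj u) c k
    simp only [MulAut.conj_apply] at h
    rw [h, h1, zpow_neg, inv_zpow]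
  have h3 : u * c ^ k = c ^ (-k) * u := by
    rw [← h2]; group
  calc u ((c ^ k) x) = (u * c ^ k) x := rfl
    _ = (c ^ (-k) * u) x := by rw [h3]
    _ = (c ^ (-k)) (u x) := rfl

lemma zpow_apply_zpow_apply (c : Perm (Fin 7)) (i j : ℤ) (x : Fin 7) :
    (c ^ i) ((c ^ j) x) = (c ^ (i + j)) x := by
  rw [zpow_add]; rfl

lemma refl_unique_fix {c u : Perm (Fin 7)} (hc : orderOf c = 7) (hu : u * u = 1)
    (huc : u * c * u = c⁻¹) : ∃! y : Fin 7, u y = y := by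
  have hc7 : c ^ (7 : ℤ) = 1 := by
    have h7 : c ^ orderOf c = 1 := pow_orderOf_eq_one c
    rw [hc] at h7
    exact_mod_cast h7
  obtain ⟨m, hm⟩ := cycle_trans hc 0 (u 0)
  have hex : ∃ y : Fin 7, u y = y := by
    refine ⟨(c ^ (4 * m)) 0, ?_⟩
    have h1 : u ((c ^ (4 * m)) 0) = (c ^ (-(4 * m))) ((c ^ m) 0) := by
      rw [conj_zpow_apply hu huc, hm]
    have he : c ^ ((4:ℤ) * m) = c ^ (-(4 * m) + m) := by
      have h2 : c ^ ((-(4 * m) + m) + 7 * m) = c ^ (-(4 * m) + m) := by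
        rw [zpow_add, zpow_mul, hc7, one_zpow, mul_one]
      rw [← h2]
      congr 1
      ring
    rw [h1, zpow_apply_zpow_apply, he]
  obtain ⟨y, hyfix⟩ := hex
  refine ⟨y, hyfix, ?_⟩
  intro y' hy'
  obtain ⟨k, hk⟩ := cycle_trans hc y y'
  have h3 : (c ^ (-k)) y = (c ^ k) y := by
    have h := conj_zpow_apply hu huc k y
    rw [hk, hy', hyfix] at h
    rw [← h, hk]
  have h4 : (c ^ (2 * k)) y = y := by
    have e1 : (c ^ (2 * k)) y = (c ^ k) ((c ^ k) y) := by
      rw [zpow_apply_zpow_apply]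
      congr 1
      ring
    rw [e1, ← h3, zpow_apply_zpow_apply]
    simp
  have h5 : (7:ℤ) ∣ 2 * k := seven_dvd_of_zpow_fixed hc (2 * k) y h4
  have h6 : (7:ℤ) ∣ k := by omega
  obtain ⟨t, ht⟩ := h6
  have h7 : c ^ k = 1 := by rw [ht, zpow_mul, hc7, one_zpow]
  rw [← hk, h7]
  rfl

lemma orderOf_mul_eq_seven (a b : Perm (Fin 7)) (ha : orderOf a = 2) (hb : orderOf b = 2)
    (h : Nonempty (↥(Subgroup.closure ({a, b} : Set (Perm (Fin 7)))) ≃* DihedralGroup 7)) :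
    orderOf (a * b) = 7 := by
  obtain ⟨e⟩ := h
  set H := Subgroup.closure ({a, b} : Set (Perm (Fin 7))) with hH
  have haH : a ∈ H := Subgroup.subset_closure (by simp)
  have hbH : b ∈ H := Subgroup.subset_closure (by simp)
  have habH : a * b ∈ H := mul_mem haH hbH
  have hcard : Nat.card H = 14 := by
    rw [Nat.card_congr e.toEquiv, DihedralGroup.nat_card]
  -- order of a*b equals order of its image in DihedralGroup 7
  have hord : orderOf (a * b) = orderOf (e ⟨a * b, habH⟩) := by
    have h' := orderOf_injective e.toMonoidHom e.injective ⟨a * b, habH⟩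
    rw [Subgroup.orderOf_mk] at h'
    exact h'.symm
  have hmem : orderOf (a * b) = 1 ∨ orderOf (a * b) = 2 ∨ orderOf (a * b) = 7 := by
    rcases hγ : e ⟨a * b, habH⟩ with i | i
    · -- rotation: order divides 7
      have h7 : orderOf (DihedralGroup.r i : DihedralGroup 7) ∣ 7 := by
        apply orderOf_dvd_of_pow_eq_one
        have : (DihedralGroup.r 1 : DihedralGroup 7) ^ (i.val) = DihedralGroup.r i := by
          rw [DihedralGroup.r_one_pow]
          simp
        calc (DihedralGroup.r i : DihedralGroup 7) ^ 7
            = ((DihedralGroup.r 1 : DihedralGroup 7) ^ i.val) ^ 7 := by rw [this]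
          _ = ((DihedralGroup.r 1 : DihedralGroup 7) ^ 7) ^ i.val := by
              rw [← pow_mul, ← pow_mul, mul_comm]
          _ = 1 := by
              rw [show ((DihedralGroup.r 1 : DihedralGroup 7) ^ 7) = 1 from
                DihedralGroup.r_one_pow_n, one_pow]
      rw [hord, hγ]
      rcases (Nat.Prime.eq_one_or_self_of_dvd (by norm_num) _ h7) with h1 | h1
      · exact Or.inl h1
      · exact Or.inr (Or.inr h1)
    · rw [hord, hγ, DihedralGroup.orderOf_sr]
      exact Or.inr (Or.inl rfl)
  have ha2 : a * a = 1 := by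
    have := pow_orderOf_eq_one a
    rwa [ha, pow_two] at this
  have hb2 : b * b = 1 := by
    have := pow_orderOf_eq_one b
    rwa [hb, pow_two] at this
  rcases hmem with h1 | h2 | h7
  · -- a*b = 1 would force b = a and H cyclic of order 2
    exfalso
    have hab1 : a * b = 1 := orderOf_eq_one_iff.mp h1
    have hba : b = a := by
      have h' : b = a⁻¹ := eq_inv_of_mul_eq_one_left (by
        have : a * (b * a) = a * 1 := by rw [← mul_assoc, hab1, one_mul, mul_one]
        exact mul_left_cancel this)
      rw [h', inv_eq_of_mul_eq_one_right ha2]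
    have hHa : H = Subgroup.zpowers a := by
      rw [hH, hba, Set.pair_eq_singleton, Subgroup.zpowers_eq_closure]
    rw [hHa, Nat.card_zpowers, ha] at hcard
    norm_num at hcard
  · -- (a*b)² = 1 would make H abelian, but D₇ is not
    exfalso
    have hab2 : (a * b) * (a * b) = 1 := by
      have := pow_orderOf_eq_one (a * b)
      rwa [h2, pow_two] at this
    have hcomm : a * b = b * a := by
      have h' : (a * b)⁻¹ = b * a := by
        rw [mul_inv_rev, inv_eq_of_mul_eq_one_right ha2, inv_eq_of_mul_eq_one_right hb2]
      rw [← h', eq_comm, inv_eq_of_mul_eq_one_right hab2]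
    -- every element of H commutes with a and with b
    have key : ∀ u ∈ ({a, b} : Set (Perm (Fin 7))), ∀ x ∈ H, u * x = x * u := by
      intro u hu x hx
      induction hx using Subgroup.closure_induction with
      | mem y hy =>
        rcases hu with rfl | hu
        · rcases hy with rfl | hy
          · rfl
          · rw [Set.mem_singleton_iff] at hy; subst hy; exact hcomm
        · rw [Set.mem_singleton_iff] at hu; subst hu
          rcases hy with rfl | hy
          · exact hcomm.symm
          · rw [Set.mem_singleton_iff] at hy; subst hy; rfl
      | one => rw [mul_one, one_mul]
      | mul x y hx hy ihx ihy => rw [← mul_assoc, ihx, mul_assoc, ihy, mul_assoc]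
      | inv x hx ihx =>
        have := congrArg (fun z => x⁻¹ * z * x⁻¹) ihx
        simpa [mul_assoc] using this.symm
    have hcommH : ∀ x ∈ H, ∀ y ∈ H, x * y = y * x := by
      intro x hx y hy
      induction hx using Subgroup.closure_induction with
      | mem z hz => exact key z hz y hy
      | one => rw [mul_one, one_mul]
      | mul z w hz hw ihz ihw => rw [mul_assoc, ihw, ← mul_assoc, ihz, mul_assoc]
      | inv z hz ihz =>
        have := congrArg (fun w => z⁻¹ * w * z⁻¹) ihz
        simpa [mul_assoc] using this.symm
    -- transfer to DihedralGroup 7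
    have hD : ∀ u v : DihedralGroup 7, u * v = v * u := by
      intro u v
      have := hcommH (e.symm u) (e.symm u).2 (e.symm v) (e.symm v).2
      have h'' : e.symm u * e.symm v = e.symm v * e.symm u := Subtype.ext this
      calc u * v = e (e.symm u) * e (e.symm v) := by rw [e.apply_symm_apply, e.apply_symm_apply]
        _ = e (e.symm u * e.symm v) := (map_mul e _ _).symm
        _ = e (e.symm v * e.symm u) := by rw [h'']
        _ = v * u := by rw [map_mul, e.apply_symm_apply, e.apply_symm_apply]
    have := hD (DihedralGroup.r 1) (DihedralGroup.sr 0)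
    rw [DihedralGroup.r_mul_sr, DihedralGroup.sr_mul_r] at this
    simp only [DihedralGroup.sr.injEq] at this
    rw [zero_sub, zero_add] at this
    exact absurd this (by decide)
  · exact h7

/-- If involutions `a, b ∈ S₇` generate a subgroup isomorphic to `D₇`, then each of
`a` and `b` fixes exactly one element of `{1,…,7}` (equivalently, is a product of three
disjoint transpositions), and their fixed points are distinct. -/
theorem involutions_gen_dihedral_fixed_points
    (a b : Equiv.Perm (Fin 7)) (ha : orderOf a = 2) (hb : orderOf b = 2)
    (h : Nonempty (↥(Subgroup.closure ({a, b} : Set (Equiv.Perm (Fin 7)))) ≃* DihedralGroup 7)) :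
    (∃! i : Fin 7, a i = i) ∧ (∃! i : Fin 7, b i = i) ∧
      ∀ i j : Fin 7, a i = i → b j = j → i ≠ j := by
  have hc : orderOf (a * b) = 7 := orderOf_mul_eq_seven a b ha hb h
  have ha2 : a * a = 1 := by
    have := pow_orderOf_eq_one a
    rwa [ha, pow_two] at this
  have hb2 : b * b = 1 := by
    have := pow_orderOf_eq_one b
    rwa [hb, pow_two] at this
  have hinv : (a * b)⁻¹ = b * a := by
    rw [mul_inv_rev, inv_eq_of_mul_eq_one_right ha2, inv_eq_of_mul_eq_one_right hb2]
  have hac : a * (a * b) * a = (a * b)⁻¹ := by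
    rw [hinv, show a * (a * b) * a = (a * a) * (b * a) by group, ha2, one_mul]
  have hbc : b * (a * b) * b = (a * b)⁻¹ := by
    rw [hinv, show b * (a * b) * b = (b * a) * (b * b) by group, hb2, mul_one]
  refine ⟨refl_unique_fix hc ha2 hac, refl_unique_fix hc hb2 hbc, ?_⟩
  intro i j hi hj hij
  subst hij
  have : (a * b) i = i := by
    have : a (b i) = a i := by rw [hj]
    rw [hi] at this
    exact this
  exact cycle_nofix hc i this
end

section
/- In a subgroup of S₇ isomorphic to the dihedral group D₇ of order 14, each of the numbers 1,...,7 is fixed by exactly one of the 7 involutions of the subgroup. -/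
/-- In a subgroup of `S₇` isomorphic to the dihedral group `D₇` of order 14, each of the
numbers `1,…,7` is fixed by exactly one of the 7 involutions of the subgroup. -/
theorem dihedral_subgroup_unique_involution_fixing
    (H : Subgroup (Equiv.Perm (Fin 7)))
    (h : Nonempty (↥H ≃* DihedralGroup 7)) (n : Fin 7) :
    ∃! c : Equiv.Perm (Fin 7), c ∈ H ∧ orderOf c = 2 ∧ c n = n := by
  classical
  obtain ⟨e⟩ := h
  have hcardH : Nat.card H = 14 := by
    rw [Nat.card_congr e.toEquiv]
    simp [Nat.card_eq_fintype_card, DihedralGroup.card]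
  -- element ρ of order 7 in H
  set ρ : H := e.symm (DihedralGroup.r 1) with hρ
  have hρ7 : orderOf ρ = 7 := by
    rw [hρ, MulEquiv.orderOf_eq e.symm]
    exact DihedralGroup.orderOf_r_one
  set σ : Equiv.Perm (Fin 7) := (ρ : Equiv.Perm (Fin 7)) with hσ
  have hσ7 : orderOf σ = 7 := by
    rw [hσ, Subgroup.orderOf_coe, hρ7]
  have hcyc : σ.IsCycle := Equiv.Perm.isCycle_of_prime_order'' (by norm_num) (by simp [hσ7])
  have hsupp : σ.support = Finset.univ := by
    apply Finset.eq_univ_of_card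
    rw [← hcyc.orderOf, hσ7]; simp
  -- orbit of n under H is everything
  have horbit : MulAction.orbit H n = Set.univ := by
    ext m
    simp only [Set.mem_univ, iff_true, MulAction.mem_orbit_iff]
    have hn : σ n ≠ n := by
      have := hsupp ▸ Finset.mem_univ n; rwa [Equiv.Perm.mem_support] at this
    have hm : σ m ≠ m := by
      have := hsupp ▸ Finset.mem_univ m; rwa [Equiv.Perm.mem_support] at this
    obtain ⟨k, hk⟩ := hcyc.exists_pow_eq hn hm
    exact ⟨ρ ^ k, hk⟩
  have hstab : Nat.card (MulAction.stabilizer H n) = 2 := by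
    have horbcard : Nat.card (MulAction.orbit H n) = 7 := by
      rw [horbit]
      simpa using Nat.card_congr (Equiv.Set.univ (Fin 7))
    have h1 := Nat.card_congr (MulAction.orbitProdStabilizerEquivGroup H n)
    rw [Nat.card_prod, horbcard, hcardH] at h1
    omega
  -- the stabilizer is a group of order 2
  obtain ⟨c, hc, hcu⟩ := (Nat.card_eq_two_iff' (1 : MulAction.stabilizer H n)).mp hstab
  have hcH : ((c : H) : Equiv.Perm (Fin 7)) ∈ H := (c : H).2
  have hcord2 : orderOf c = 2 := by
    have hdvd : orderOf c ∣ 2 := hstab ▸ orderOf_dvd_natCard c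
    rcases (Nat.dvd_prime Nat.prime_two).mp hdvd with h | h
    · exact absurd (orderOf_eq_one_iff.mp h) hc
    · exact h
  have hcord : orderOf ((c : H) : Equiv.Perm (Fin 7)) = 2 := by
    rw [Subgroup.orderOf_coe, Subgroup.orderOf_coe, hcord2]
  have hcfix : ((c : H) : Equiv.Perm (Fin 7)) n = n := c.2
  refine ⟨((c : H) : Equiv.Perm (Fin 7)), ⟨hcH, hcord, hcfix⟩, ?_⟩
  rintro d ⟨hdH, hdord, hdfix⟩
  have hd1 : d ≠ 1 := by
    intro h1; rw [h1] at hdord; simp at hdord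
  set d' : MulAction.stabilizer H n := ⟨⟨d, hdH⟩, hdfix⟩ with hd'
  have hd'1 : d' ≠ 1 := by
    intro h1
    apply hd1
    have : ((d' : H) : Equiv.Perm (Fin 7)) = (((1 : MulAction.stabilizer H n) : H) :
        Equiv.Perm (Fin 7)) := by rw [h1]
    simpa [hd'] using this
  have hdc : d' = c := hcu d' hd'1
  have : ((d' : H) : Equiv.Perm (Fin 7)) = ((c : H) : Equiv.Perm (Fin 7)) := by rw [hdc]
  simpa [hd'] using this
end
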